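/- For the Black-Scholes call price P(S,K,τ,σ) with d± = log(S/K)/(σ√τ) ± σ√τ/2, the gamma satisfies ∂²P/∂S² = φ(d₊)/(S·σ·√τ). -/

import Mathlib

open Real MeasureTheory

/-- Standard normal probability density function. -/
noncomputable def stdPdf (x : ℝ) : ℝ := (Real.sqrt (2 * Real.pi))⁻¹ * Real.exp (-x ^ 2 / 2)

/-- Standard normal cumulative distribution function. -/
noncomputable def stdCdf (x : ℝ) : ℝ := ∫ t in Set.Iic x, stdPdf t

/-- Black-Scholes call price. -/
noncomputable def bsPrice (S K τ σ : ℝ) : ℝ :=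
  S * stdCdf (Real.log (S / K) / (σ * Real.sqrt τ) + σ * Real.sqrt τ / 2)
    - K * stdCdf (Real.log (S / K) / (σ * Real.sqrt τ) - σ * Real.sqrt τ / 2)

lemma stdPdf_integrable : MeasureTheory.Integrable stdPdf := by
  have h : MeasureTheory.Integrable (fun x : ℝ => Real.exp (-(2⁻¹ : ℝ) * x ^ 2)) :=
    integrable_exp_neg_mul_sq (by norm_num)
  have := h.const_mul (Real.sqrt (2 * Real.pi))⁻¹
  refine this.congr (Filter.Eventually.of_forall fun x => ?_)
  show (Real.sqrt (2 * Real.pi))⁻¹ * Real.exp (-(2:ℝ)⁻¹ * x ^ 2) = stdPdf x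
  rw [show -(2:ℝ)⁻¹ * x ^ 2 = -x ^ 2 / 2 by ring]
  rfl

lemma stdPdf_continuous : Continuous stdPdf := by
  unfold stdPdf
  fun_prop

lemma stdCdf_hasDerivAt (x : ℝ) : HasDerivAt stdCdf (stdPdf x) x := by
  have key : ∀ y : ℝ, stdCdf y = stdCdf 0 + ∫ t in (0:ℝ)..y, stdPdf t := by
    intro y
    rw [← intervalIntegral.integral_Iic_sub_Iic
      (stdPdf_integrable.integrableOn) (stdPdf_integrable.integrableOn)]
    simp [stdCdf]
  have h : HasDerivAt (fun u => ∫ t in (0:ℝ)..u, stdPdf t) (stdPdf x) x :=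
    intervalIntegral.integral_hasDerivAt_right
      (stdPdf_integrable.intervalIntegrable)
      (stdPdf_continuous.stronglyMeasurableAtFilter _ _)
      stdPdf_continuous.continuousAt
  have h2 := (h.const_add (stdCdf 0))
  exact h2.congr_of_eventuallyEq (Filter.Eventually.of_forall fun y => (key y))

/-- The key identity: S φ(d₊) = K φ(d₋). -/
lemma key_identity (s K c : ℝ) (hs : 0 < s) (hK : 0 < K) (hc : 0 < c) :
    s * stdPdf (Real.log (s / K) / c + c / 2) =
      K * stdPdf (Real.log (s / K) / c - c / 2) := by
  set L := Real.log (s / K)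
  have hexp : Real.exp L = s / K := Real.exp_log (by positivity)
  unfold stdPdf
  have h1 : -(L / c + c / 2) ^ 2 / 2 = -(L / c - c / 2) ^ 2 / 2 + (-L) := by
    field_simp
    ring
  rw [h1, Real.exp_add]
  rw [Real.exp_neg, hexp]
  field_simp

/-- The Black-Scholes gamma: ∂²P/∂S² = φ(d₊)/(S·σ·√τ). -/
theorem bs_gamma (S K τ σ : ℝ) (hS : 0 < S) (hK : 0 < K) (hτ : 0 < τ) (hσ : 0 < σ) :
    deriv (deriv (fun s => bsPrice s K τ σ)) S =
      stdPdf (Real.log (S / K) / (σ * Real.sqrt τ) + σ * Real.sqrt τ / 2) /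
        (S * σ * Real.sqrt τ) := by
  set c := σ * Real.sqrt τ with hc_def
  have hc : 0 < c := by positivity
  -- d₊ as a function
  set dp : ℝ → ℝ := fun s => Real.log (s / K) / c + c / 2 with hdp_def
  set dm : ℝ → ℝ := fun s => Real.log (s / K) / c - c / 2 with hdm_def
  have hd : ∀ s : ℝ, 0 < s → HasDerivAt (fun u => Real.log (u / K) / c) (1 / (s * c)) s := by
    intro s hs
    have h1 : HasDerivAt (fun u : ℝ => Real.log (u / K)) (1 / s) s := by
      have : HasDerivAt (fun u : ℝ => Real.log u - Real.log K) (1 / s) s :=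
        ((Real.hasDerivAt_log hs.ne').sub_const _).congr_deriv (by rw [one_div])
      refine this.congr_of_eventuallyEq ?_
      filter_upwards [eventually_gt_nhds hs] with u hu
      rw [Real.log_div hu.ne' hK.ne']
    have := h1.div_const c
    refine this.congr_deriv ?_
    ring
  have hdp : ∀ s : ℝ, 0 < s → HasDerivAt dp (1 / (s * c)) s := fun s hs =>
    (hd s hs).add_const _
  have hdm : ∀ s : ℝ, 0 < s → HasDerivAt dm (1 / (s * c)) s := fun s hs =>
    (hd s hs).sub_const _
  -- first derivative of bsPrice equals stdCdf ∘ dp on (0,∞)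
  have hfirst : ∀ s : ℝ, 0 < s →
      HasDerivAt (fun u => bsPrice u K τ σ) (stdCdf (dp s)) s := by
    intro s hs
    have h1 : HasDerivAt (fun u => u * stdCdf (dp u))
        (1 * stdCdf (dp s) + s * (stdPdf (dp s) * (1 / (s * c)))) s :=
      (hasDerivAt_id s).mul ((stdCdf_hasDerivAt (dp s)).comp s (hdp s hs))
    have h2 : HasDerivAt (fun u => K * stdCdf (dm u))
        (K * (stdPdf (dm s) * (1 / (s * c)))) s :=
      ((stdCdf_hasDerivAt (dm s)).comp s (hdm s hs)).const_mul K
    have key := key_identity s K c hs hK hc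
    have hfun : (fun u => bsPrice u K τ σ) = fun u => u * stdCdf (dp u) - K * stdCdf (dm u) := by
      funext u; simp [bsPrice, hdp_def, hdm_def, hc_def]
    rw [hfun]
    refine (h1.sub h2).congr_deriv ?_
    have key' : s * stdPdf (dp s) = K * stdPdf (dm s) := key
    linear_combination (1 / (s * c)) * key'
  -- deriv of bsPrice is eventually stdCdf ∘ dp
  have hev : deriv (fun s => bsPrice s K τ σ) =ᶠ[nhds S] fun s => stdCdf (dp s) := by
    filter_upwards [eventually_gt_nhds hS] with s hs
    exact (hfirst s hs).deriv
  rw [Filter.EventuallyEq.deriv_eq hev]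
  have h2 : HasDerivAt (fun s => stdCdf (dp s)) (stdPdf (dp S) * (1 / (S * c))) S :=
    (stdCdf_hasDerivAt (dp S)).comp S (hdp S hS)
  rw [h2.deriv, mul_one_div]
  simp only [hdp_def]
  congr 1
  rw [hc_def]
  ring
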